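/- (Tychonoff for U-spaces) Let (X i, C i), i : I, be a family of U-spaces each satisfying (K). Equip the product set Π i, X i with the product (initial) U-graph structure: C 𝔵 y iff for every i, C i (Ultrafilter.map (fun g => g i) 𝔵) (y i). Then the product U-graph satisfies (K): every ultrafilter on Π i, X i converges to at least one point. -/
import Mathlib


universe u

/-- The extension `Ĉ` of a U-graph `C` to ultrafilters of ultrafilters. -/
def UGraph.hat {X : Type u} (C : Ultrafilter X → X → Prop) :
    Ultrafilter (Ultrafilter X) → Ultrafilter X → Prop := fun 𝔛 𝔶 =>
  ∃ 𝔴 : Ultrafilter {p : Ultrafilter X × X // C p.1 p.2},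
    Ultrafilter.map (fun p => p.val.1) 𝔴 = 𝔛 ∧ Ultrafilter.map (fun p => p.val.2) 𝔴 = 𝔶

/-- Reflexivity of a U-graph. -/
def UGraph.Refl {X : Type u} (C : Ultrafilter X → X → Prop) : Prop :=
  ∀ x : X, C (pure x) x

/-- Transitivity of a U-graph. -/
def UGraph.Trans {X : Type u} (C : Ultrafilter X → X → Prop) : Prop :=
  ∀ (𝔛 : Ultrafilter (Ultrafilter X)) (𝔶 : Ultrafilter X) (z : X),
    UGraph.hat C 𝔛 𝔶 → C 𝔶 z → C (Ultrafilter.bind 𝔛 id) z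

/-- Monotone maps of U-graphs. -/
def UGraph.Mono {X Y : Type u} (CX : Ultrafilter X → X → Prop)
    (CY : Ultrafilter Y → Y → Prop) (f : X → Y) : Prop :=
  ∀ (𝔵 : Ultrafilter X) (y : X), CX 𝔵 y → CY (Ultrafilter.map f 𝔵) (f y)

theorem stmt2 {I : Type u} {X : I → Type u} (C : ∀ i, Ultrafilter (X i) → X i → Prop)
    (hspace : ∀ i, UGraph.Refl (C i) ∧ UGraph.Trans (C i))
    (hK : ∀ i (𝔵 : Ultrafilter (X i)), ∃ y : X i, C i 𝔵 y)
    (𝔵 : Ultrafilter (∀ i, X i)) :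
    ∃ y : ∀ i, X i, ∀ i, C i (Ultrafilter.map (fun g : ∀ j, X j => g i) 𝔵) (y i) := by
  choose y hy using fun i => hK i (Ultrafilter.map (fun g : ∀ j, X j => g i) 𝔵)
  exact ⟨y, hy⟩
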